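/- Let ε₀ > 0 and let B, S be bounded self-adjoint operators with (B-S)² ≥ ε₀·1, and let D be a self-adjoint operator on another Hilbert space. Then (B-S)²⊗1 + 1⊗D² is a positive invertible operator, with ((B-S)²⊗1 + 1⊗D²)^{-1} = (1⊗(ε₀+D²)^{-1})·[((B-S)²-ε₀)⊗(ε₀+D²)^{-1} + 1⊗1]^{-1}, and the operator ((B-S)²-ε₀)⊗(ε₀+D²)^{-1} + 1⊗1 is invertible with spectrum bounded below by 1. -/

import Mathlib

noncomputable section
open ContinuousLinearMap

/-- A coercive operator on a complex Hilbert space is invertible. -/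
lemma isUnit_of_coercive {H : Type*} [NormedAddCommGroup H] [InnerProductSpace ℂ H]
    [CompleteSpace H] (T : H →L[ℂ] H) (ε : ℝ) (hε : 0 < ε)
    (hT : ∀ v : H, ε * ‖v‖ ^ 2 ≤ T.reApplyInnerSelf v) : IsUnit T := by
  rw [ContinuousLinearMap.isUnit_iff_bijective,
    ContinuousLinearMap.bijective_iff_dense_range_and_antilipschitz]
  have hlow : ∀ v : H, ε * ‖v‖ ≤ ‖T v‖ := by
    intro v
    rcases eq_or_ne v 0 with rfl | hv
    · simp
    · have h1 : ε * ‖v‖ ^ 2 ≤ ‖T v‖ * ‖v‖ := by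
        refine (hT v).trans ?_
        calc T.reApplyInnerSelf v ≤ ‖(inner ℂ (T v) v : ℂ)‖ := by
              simpa [ContinuousLinearMap.reApplyInnerSelf] using
                RCLike.re_le_norm (inner ℂ (T v) v : ℂ)
          _ ≤ ‖T v‖ * ‖v‖ := norm_inner_le_norm _ _
      have hv' : 0 < ‖v‖ := norm_pos_iff.mpr hv
      nlinarith
  constructor
  · -- dense range
    have horth : ((LinearMap.range (T : H →ₗ[ℂ] H)).topologicalClosure)ᗮ = ⊥ := by
      rw [Submodule.eq_bot_iff]
      intro w hw
      have h0 : (inner ℂ (T w) w : ℂ) = 0 :=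
        hw (T w) (Submodule.le_topologicalClosure _ (LinearMap.mem_range_self _ w))
      have := hT w
      rw [ContinuousLinearMap.reApplyInnerSelf, h0] at this
      simp only [map_zero] at this
      have hw2 : ‖w‖ ^ 2 ≤ 0 := by nlinarith
      have h3 : ‖w‖ ^ 2 = 0 := le_antisymm hw2 (sq_nonneg _)
      have h4 : ‖w‖ = 0 := by
        simpa using (pow_eq_zero_iff (n := 2) (by norm_num)).mp h3
      exact norm_eq_zero.mp h4
    haveI : CompleteSpace ((LinearMap.range (T : H →ₗ[ℂ] H)).topologicalClosure : Submodule ℂ H) :=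
      (Submodule.isClosed_topologicalClosure _).completeSpace_coe
    exact Submodule.orthogonal_eq_bot_iff.mp horth
  · -- antilipschitz
    refine ⟨(⟨ε, hε.le⟩ : NNReal)⁻¹, T.antilipschitz_of_bound fun x => ?_⟩
    have h : ‖x‖ ≤ ε⁻¹ * ‖T x‖ := by
      rw [← div_eq_inv_mul, le_div_iff₀ hε]
      linarith [hlow x]
    exact h

lemma commute_ringInverse_right {M₀ : Type*} [MonoidWithZero M₀] {a b : M₀}
    (h : Commute a b) : Commute a (Ring.inverse b) := by
  by_cases hb : IsUnit b
  · obtain ⟨u, rfl⟩ := hb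
    rw [Ring.inverse_unit]
    exact h.units_inv_right
  · rw [Ring.inverse_non_unit _ hb]
    exact Commute.zero_right a

theorem statement10 {H : Type*} [NormedAddCommGroup H] [InnerProductSpace ℂ H]
    [CompleteSpace H]
    (ε₀ : ℝ) (hε₀ : 0 < ε₀)
    (BS : H →L[ℂ] H)               -- the operator (B-S)⊗1
    (hBS : IsSelfAdjoint BS)
    (X Y : H →L[ℂ] H)
    (hX : X = BS ∘L BS)            -- X = (B-S)²⊗1
    (hXlow : ∀ v : H, ε₀ * ‖v‖ ^ 2 ≤ X.reApplyInnerSelf v)   -- (B-S)² ≥ ε₀·1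
    (hY : Y.IsPositive)            -- Y = 1⊗D² ≥ 0
    (hXY : Commute X Y) :
    IsUnit ((ε₀ : ℂ) • (1 : H →L[ℂ] H) + Y) ∧
    IsUnit (X + Y) ∧ (X + Y).IsPositive ∧
    IsUnit ((X - (ε₀ : ℂ) • (1 : H →L[ℂ] H)) *
      Ring.inverse ((ε₀ : ℂ) • (1 : H →L[ℂ] H) + Y) + 1) ∧
    Ring.inverse (X + Y) =
      Ring.inverse ((ε₀ : ℂ) • (1 : H →L[ℂ] H) + Y) *
        Ring.inverse ((X - (ε₀ : ℂ) • (1 : H →L[ℂ] H)) *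
          Ring.inverse ((ε₀ : ℂ) • (1 : H →L[ℂ] H) + Y) + 1) ∧
    ∀ z ∈ spectrum ℂ ((X - (ε₀ : ℂ) • (1 : H →L[ℂ] H)) *
      Ring.inverse ((ε₀ : ℂ) • (1 : H →L[ℂ] H) + Y) + 1), 1 ≤ z.re := by
  set s : H →L[ℂ] H := (ε₀ : ℂ) • 1 with hs
  -- basic self-adjointness facts
  have hXsa : IsSelfAdjoint X := by
    rw [hX, ← ContinuousLinearMap.mul_def]
    show star (BS * BS) = BS * BS
    rw [star_mul, hBS.star_eq]
  have hYim : ∀ v : H, (inner ℂ (Y v) v : ℂ).im = 0 := by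
    intro v
    have h1 : (inner ℂ (Y v) v : ℂ) = inner ℂ v (Y v) := hY.1 v v
    have h2 : (inner ℂ v (Y v) : ℂ) = (starRingEnd ℂ) (inner ℂ (Y v) v) :=
      (inner_conj_symm _ _).symm
    have : (starRingEnd ℂ) (inner ℂ (Y v) v : ℂ) = inner ℂ (Y v) v := by rw [← h2, ← h1]
    exact (Complex.conj_eq_iff_im.mp this)
  -- key inner-product computation
  have hcalc : ∀ (c : ℂ) (v : H),
      ((X - s) + c • (s + Y)).reApplyInnerSelf v =
        X.reApplyInnerSelf v - ε₀ * ‖v‖ ^ 2 + c.re * (ε₀ * ‖v‖ ^ 2)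
          + c.re * Y.reApplyInnerSelf v := by
    intro c v
    have hvv : (inner ℂ v v : ℂ) = ((‖v‖ ^ 2 : ℝ) : ℂ) := by
      rw [inner_self_eq_norm_sq_to_K]; norm_cast
    simp only [ContinuousLinearMap.reApplyInnerSelf, ContinuousLinearMap.add_apply,
      ContinuousLinearMap.sub_apply, ContinuousLinearMap.smul_apply,
      ContinuousLinearMap.one_apply, hs, inner_add_left, inner_sub_left, inner_smul_left,
      hvv, RCLike.re_to_complex, Complex.add_re, Complex.sub_re,
      Complex.mul_re, Complex.add_im, Complex.sub_im, Complex.mul_im, Complex.conj_re,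
      Complex.conj_im, ← Complex.ofReal_pow, Complex.ofReal_re, Complex.ofReal_im,
      map_add, map_mul]
    rw [hYim v]
    ring
  have hT1coer : ∀ v : H, ε₀ * ‖v‖ ^ 2 ≤ (s + Y).reApplyInnerSelf v := by
    intro v
    have hvv : (inner ℂ v v : ℂ) = ((‖v‖ ^ 2 : ℝ) : ℂ) := by
      rw [inner_self_eq_norm_sq_to_K]; norm_cast
    simp only [ContinuousLinearMap.reApplyInnerSelf, ContinuousLinearMap.add_apply,
      ContinuousLinearMap.smul_apply, ContinuousLinearMap.one_apply, hs, inner_add_left,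
      inner_smul_left, hvv, RCLike.re_to_complex, Complex.add_re,
      Complex.mul_re, Complex.add_im, Complex.mul_im, Complex.conj_re, Complex.conj_im,
      ← Complex.ofReal_pow, Complex.ofReal_re, Complex.ofReal_im]
    have := hY.2 v
    simp only [ContinuousLinearMap.reApplyInnerSelf, RCLike.re_to_complex] at this
    nlinarith [sq_nonneg ‖v‖]
  have hU1 : IsUnit (s + Y) := isUnit_of_coercive _ ε₀ hε₀ hT1coer
  have hXYcoer : ∀ v : H, ε₀ * ‖v‖ ^ 2 ≤ (X + Y).reApplyInnerSelf v := by
    intro v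
    simp only [ContinuousLinearMap.reApplyInnerSelf, ContinuousLinearMap.add_apply,
      inner_add_left, RCLike.re_to_complex, Complex.add_re]
    have h1 := hXlow v
    have h2 := hY.2 v
    simp only [ContinuousLinearMap.reApplyInnerSelf, RCLike.re_to_complex] at h1 h2
    linarith
  have hU2 : IsUnit (X + Y) := isUnit_of_coercive _ ε₀ hε₀ hXYcoer
  have hPos : (X + Y).IsPositive :=
    ContinuousLinearMap.isPositive_def'.mpr ⟨hXsa.add hY.isSelfAdjoint, fun v => le_trans (by positivity) (hXYcoer v)⟩
  -- commutation facts
  have hsC : ∀ W : H →L[ℂ] H, Commute W s := fun W => (Commute.one_right W).smul_right ε₀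
  have hXT1 : Commute X (s + Y) := (hsC X).add_right hXY
  have hsT1 : Commute s (s + Y) := (Commute.refl s).add_right (hsC Y).symm
  have hPT1 : Commute (X - s) (s + Y) := hXT1.sub_left hsT1
  have hPR : Commute (X - s) (Ring.inverse (s + Y)) := commute_ringInverse_right hPT1
  have hRT1 : Ring.inverse (s + Y) * (s + Y) = 1 := Ring.inverse_mul_cancel _ hU1
  have hT1R : (s + Y) * Ring.inverse (s + Y) = 1 := Ring.mul_inverse_cancel _ hU1
  set R : H →L[ℂ] H := Ring.inverse (s + Y) with hRdef
  have hid : ((X - s) * R + 1) * (s + Y) = X + Y := by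
    rw [add_mul, one_mul, mul_assoc, hRT1, mul_one]
    abel
  have h4 : (X - s) * R + 1 = (X + Y) * R := by
    calc (X - s) * R + 1 = ((X - s) * R + 1) * ((s + Y) * R) := by rw [hT1R, mul_one]
      _ = (((X - s) * R + 1) * (s + Y)) * R := by rw [mul_assoc]
      _ = (X + Y) * R := by rw [hid]
  have hUR : IsUnit R := isUnit_ringInverse.mpr hU1
  have hU4 : IsUnit ((X - s) * R + 1) := by rw [h4]; exact hU2.mul hUR
  have hcomm4 : Commute ((X - s) * R + 1) (s + Y) := by
    have hR1 : Commute R (s + Y) := (commute_ringInverse_right (Commute.refl (s + Y))).symm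
    exact (hPT1.mul_left hR1).add_left (Commute.one_left _)
  have hinv : Ring.inverse (X + Y) = R * Ring.inverse ((X - s) * R + 1) := by
    conv_lhs => rw [← hid]
    rw [Ring.mul_inverse_rev' hcomm4]
  refine ⟨hU1, hU2, hPos, hU4, hinv, ?_⟩
  -- spectrum bound
  intro z hz
  by_contra hlt
  push_neg at hlt
  set c : ℂ := 1 - z with hc
  have hcre : 0 < c.re := by
    have : c.re = 1 - z.re := by simp [hc, Complex.sub_re]
    linarith
  have hUc : IsUnit ((X - s) + c • (s + Y)) := by
    refine isUnit_of_coercive _ (c.re * ε₀) (mul_pos hcre hε₀) fun v => ?_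
    rw [hcalc c v]
    nlinarith [hXlow v, mul_nonneg hcre.le (hY.2 v), sq_nonneg ‖v‖]
  have key : algebraMap ℂ (H →L[ℂ] H) z - ((X - s) * R + 1) =
      -(R * ((X - s) + c • (s + Y))) := by
    have h1 : R * ((X - s) + c • (s + Y)) = (X - s) * R + c • 1 := by
      rw [mul_add, mul_smul_comm, hRT1, ← hPR.eq]
    rw [h1, Algebra.algebraMap_eq_smul_one, hc, sub_smul, one_smul]
    module
  exact (spectrum.mem_iff.mp hz) (key ▸ ((hUR.mul hUc).neg))
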